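/- Let ρ ≥ 1 and let S be a symmetric ρ×ρ integer matrix with det S ≠ 0. Let a, b ∈ ℤ^ρ be primitive vectors (the gcd of the entries of each is 1) such that d_a := aᵀSa and d_b := bᵀSb are positive integers that are not perfect squares. Let ℓ_a, k_a, ℓ_b, k_b be positive integers satisfying the Pell equations ℓ_a² − d_a·k_a² = 1 and ℓ_b² − d_b·k_b² = 1. If k_a·ℓ_b·(S a) = k_b·ℓ_a·(S b) as vectors in ℤ^ρ (i.e., the linear functionals v ↦ (k_a/ℓ_a)·vᵀSa and v ↦ (k_b/ℓ_b)·vᵀSb coincide), then a = b, and in particular d_a = d_b. -/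

import Mathlib

open Matrix

/-- Lemma 2.7 of the paper: Pell bounds of distinct primitive classes are distinct
linear functionals. If the Pell bounds of two primitive vectors `a`, `b` (with respect to a
nondegenerate symmetric integer matrix `S`) coincide, then `a = b`. -/
theorem pell_bounds_distinct (ρ : ℕ) (hρ : 1 ≤ ρ)
    (S : Matrix (Fin ρ) (Fin ρ) ℤ) (hS : S.IsSymm) (hdet : S.det ≠ 0)
    (a b : Fin ρ → ℤ)
    (ha : Finset.univ.gcd a = 1) (hb : Finset.univ.gcd b = 1)
    (hda : 0 < a ⬝ᵥ (S *ᵥ a)) (hdb : 0 < b ⬝ᵥ (S *ᵥ b))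
    (hsqa : ¬ IsSquare (a ⬝ᵥ (S *ᵥ a))) (hsqb : ¬ IsSquare (b ⬝ᵥ (S *ᵥ b)))
    (la ka lb kb : ℤ) (hla : 0 < la) (hka : 0 < ka) (hlb : 0 < lb) (hkb : 0 < kb)
    (hpa : la ^ 2 - (a ⬝ᵥ (S *ᵥ a)) * ka ^ 2 = 1)
    (hpb : lb ^ 2 - (b ⬝ᵥ (S *ᵥ b)) * kb ^ 2 = 1)
    (heq : (ka * lb) • (S *ᵥ a) = (kb * la) • (S *ᵥ b)) :
    a = b ∧ a ⬝ᵥ (S *ᵥ a) = b ⬝ᵥ (S *ᵥ b) := by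
  have hmul : ∀ (c : ℤ) (v : Fin ρ → ℤ), S *ᵥ (c • v) = c • (S *ᵥ v) := by
    intro c v; rw [Matrix.mulVec_smul]
  have h1 : S *ᵥ ((ka * lb) • a) = S *ᵥ ((kb * la) • b) := by
    rw [hmul, hmul]; exact heq
  have h2 : S.det • ((ka * lb) • a) = S.det • ((kb * la) • b) := by
    have := congrArg (fun v => S.adjugate *ᵥ v) h1
    simpa [Matrix.mulVec_mulVec, Matrix.adjugate_mul, Matrix.smul_mulVec,
      Matrix.one_mulVec] using this
  have key : (ka * lb) • a = (kb * la) • b :=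
    smul_right_injective (Fin ρ → ℤ) hdet h2
  have hgcd : normalize (ka * lb) = normalize (kb * la) := by
    have g1 : Finset.univ.gcd ((ka * lb) • a) = normalize (ka * lb) := by
      have : Finset.univ.gcd ((ka * lb) • a) = normalize (ka * lb) * Finset.univ.gcd a := by
        exact
          Finset.gcd_mul_left (s := (Finset.univ : Finset (Fin ρ))) (f := a) (a := ka * lb)
      rw [this, ha, mul_one]
    have g2 : Finset.univ.gcd ((kb * la) • b) = normalize (kb * la) := by
      have : Finset.univ.gcd ((kb * la) • b) = normalize (kb * la) * Finset.univ.gcd b := by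
        exact
          Finset.gcd_mul_left (s := (Finset.univ : Finset (Fin ρ))) (f := b) (a := kb * la)
      rw [this, hb, mul_one]
    rw [← g1, ← g2, key]
  have hcoef : ka * lb = kb * la := by
    rwa [Int.normalize_of_nonneg (by positivity), Int.normalize_of_nonneg (by positivity)] at hgcd
  have hab : a = b := by
    have hne : ka * lb ≠ 0 := by positivity
    apply smul_right_injective (Fin ρ → ℤ) hne
    show (ka * lb) • a = (ka * lb) • b
    rw [key, hcoef]
  exact ⟨hab, by rw [hab]⟩
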